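/- Let A be an invertible r×r real matrix and T ∈ ℝ^{(r−1)×r} the matrix with first column all ones and remaining block −Id_{r−1}. Then det(T · A · Tᵀ) = det(A) · (𝟙_rᵀ · A^{−1} · 𝟙_r). -/

import Mathlib

open Matrix BigOperators

/-- For an invertible `r × r` real matrix `A` and `T` the `(r-1) × r` matrix with
first column all ones and remaining block `-Id_{r-1}`, one has
`det (T * A * Tᵀ) = det A * (𝟙ᵀ A⁻¹ 𝟙)`, the sum of entries of `A⁻¹` scaled by `det A`. -/
theorem determinant_lemma_inv (r : ℕ) (hr : 1 ≤ r) (A : Matrix (Fin r) (Fin r) ℝ)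
    (hA : IsUnit A.det)
    (T : Matrix (Fin (r - 1)) (Fin r) ℝ)
    (hT : ∀ i j, T i j =
      if (j : ℕ) = 0 then 1 else if (j : ℕ) = (i : ℕ) + 1 then -1 else 0) :
    (T * A * Tᵀ).det = A.det * ∑ s, ∑ t, A⁻¹ s t := by
  obtain ⟨n, rfl⟩ : ∃ n, r = n + 1 := ⟨r - 1, (Nat.succ_pred_eq_of_pos hr).symm⟩
  set S : Matrix (Fin (n + 1)) (Fin (n + 1)) ℝ :=
    Matrix.of (fun i j => if j = 0 then (1 : ℝ) else if j = i then -1 else 0) with hS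
  -- S is an involution
  have hSS : S * S = 1 := by
    ext i j
    rw [Matrix.mul_apply]
    rcases eq_or_ne i 0 with hi | hi
    · subst hi
      have : ∀ k : Fin (n + 1), S 0 k * S k j = if k = 0 then S k j else 0 := by
        intro k
        by_cases hk : k = 0 <;> simp [hS, hk]
      rw [Finset.sum_congr rfl fun k _ => this k, Finset.sum_ite_eq']
      simp only [Finset.mem_univ, if_true, hS, Matrix.of_apply, Matrix.one_apply, eq_comm]
      split_ifs <;> rfl
    · have : ∀ k : Fin (n + 1), S i k * S k j =
        (if k = 0 then S k j else 0) + (if k = i then -S k j else 0) := by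
        intro k
        by_cases hk0 : k = 0
        · simp [hS, hk0, Ne.symm hi]
        · by_cases hki : k = i
          · simp only [hS, Matrix.of_apply, hk0, hki, hi, if_false, if_true, if_neg, ite_true]
            split_ifs <;> ring
          · simp [hS, hk0, hki]
      rw [Finset.sum_congr rfl fun k _ => this k, Finset.sum_add_distrib,
        Finset.sum_ite_eq', Finset.sum_ite_eq']
      simp only [Finset.mem_univ, if_true]
      by_cases hj0 : j = 0
      · simp [hS, hj0, hi, Matrix.one_apply, Ne.symm hi]
      · by_cases hji : j = i
        · simp [hS, hj0, hji, hi, Matrix.one_apply, eq_comm]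
        · simp [hS, hj0, hji, hi, Matrix.one_apply, Ne.symm hji]
  have hSinv : S⁻¹ = S := Matrix.inv_eq_left_inv hSS
  have hdetS : S.det * S.det = 1 := by
    have := congrArg Matrix.det hSS
    simpa [Matrix.det_mul] using this
  -- T is S with row 0 removed
  have hTS : T = S.submatrix Fin.succ id := by
    ext i j
    rw [hT i j]
    simp only [Matrix.submatrix_apply, id_eq, hS, Matrix.of_apply]
    congr 1
    · simp only [Fin.ext_iff, Fin.val_zero]
    · congr 1
      simp [Fin.ext_iff]
  set M : Matrix (Fin (n + 1)) (Fin (n + 1)) ℝ := S * A * Sᵀ with hM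
  have hsub : T * A * Tᵀ = M.submatrix Fin.succ Fin.succ := by
    rw [hM, Matrix.submatrix_mul (S * A) Sᵀ Fin.succ id Fin.succ Function.bijective_id,
      Matrix.submatrix_mul S A Fin.succ id id Function.bijective_id, hTS,
      Matrix.transpose_submatrix, Matrix.submatrix_id_id]
  have hMdet : M.det = A.det := by
    rw [hM, Matrix.det_mul, Matrix.det_mul, Matrix.det_transpose]
    calc S.det * A.det * S.det = A.det * (S.det * S.det) := by ring
    _ = A.det := by rw [hdetS, mul_one]
  have hMunit : IsUnit M.det := hMdet ▸ hA
  have hMinv : M⁻¹ = Sᵀ * A⁻¹ * S := by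
    rw [hM, Matrix.mul_inv_rev, Matrix.mul_inv_rev, ← Matrix.transpose_nonsing_inv,
      hSinv, mul_assoc]
  have hentry : M⁻¹ 0 0 = ∑ s, ∑ t, A⁻¹ s t := by
    rw [hMinv]
    rw [Matrix.mul_apply]
    have hcol : ∀ k : Fin (n + 1), S k 0 = 1 := by intro k; simp [hS]
    calc ∑ t, (Sᵀ * A⁻¹) 0 t * S t 0 = ∑ t, ∑ s, A⁻¹ s t := by
          refine Finset.sum_congr rfl fun t _ => ?_
          rw [hcol t, mul_one, Matrix.mul_apply]
          refine Finset.sum_congr rfl fun s _ => ?_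
          rw [Matrix.transpose_apply, hcol s, one_mul]
      _ = ∑ s, ∑ t, A⁻¹ s t := Finset.sum_comm
  have hadj : M.adjugate 0 0 = (M.submatrix Fin.succ Fin.succ).det := by
    rw [Matrix.adjugate_fin_succ_eq_det_submatrix]
    simp [Fin.succAbove_zero]
  have hinvdef : M⁻¹ 0 0 = (M.det)⁻¹ * M.adjugate 0 0 := by
    rw [Matrix.inv_def]
    simp [Ring.inverse_eq_inv']
  have hdet_ne : M.det ≠ 0 := hMunit.ne_zero
  have hmul : M.adjugate 0 0 = M.det * (M⁻¹ 0 0) := by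
    rw [hinvdef]
    field_simp
  have hfin : (M.submatrix (Fin.succ : Fin n → Fin (n + 1)) Fin.succ).det
      = A.det * ∑ s, ∑ t, A⁻¹ s t := by
    rw [← hadj, hmul, hMdet, hentry]
  rw [hsub]
  exact hfin
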